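/- Let Ω ⊆ ℝ^d be open and bounded, p ∈ (1,∞), x_1,…,x_n ∈ Ω distinct, σ = (1/n) Σ_{i=1}^n δ_{x_i}, h ∈ L^p(σ; ℝ^m), and let (μ,f) ∈ TL^p with μ = (1/n) Σ_{j=1}^n δ_{y_j}, y_1,…,y_n ∈ Ω distinct. Then there exists an optimal TL^p transport map T^μ : {x_1,…,x_n} → {y_1,…,y_n} with T^μ_*σ = μ achieving d_TLp^p((σ,h),(μ,f)) = (1/n) Σ_{j=1}^n ( |x_j − T^μ(x_j)|_p^p + |h(x_j) − f(T^μ(x_j))|_p^p ); and defining the embedding [P̃((μ,f))]_j = ( (T^μ(x_j) − x_j) n^{−1/p}, (f(T^μ(x_j)) − h(x_j)) n^{−1/p} ) ∈ ℝ^{d+m}, one has P̃((σ,h)) = 0 (taking T^σ = Id) and |P̃((σ,h)) − P̃((μ,f))|_p = d_TLp((σ,h),(μ,f)). -/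

import Mathlib

open MeasureTheory Filter Topology

/-- `∑ i, |v i|^p`, the p-th power of the ℓ^p norm on ℝ^k. -/
noncomputable def lpPow (p : ℝ) {k : ℕ} (v : Fin k → ℝ) : ℝ := ∑ i, |v i| ^ p

/-- `π` is a coupling (transport plan) between `μ` and `ν`. -/
def IsCoupling {α β : Type*} [MeasurableSpace α] [MeasurableSpace β]
    (π : Measure (α × β)) (μ : Measure α) (ν : Measure β) : Prop :=
  π.map Prod.fst = μ ∧ π.map Prod.snd = ν

/-- The Kantorovich optimal transport cost for a cost function `c`. -/
noncomputable def OTCost {α β : Type*} [MeasurableSpace α] [MeasurableSpace β]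
    (c : α → β → ℝ) (μ : Measure α) (ν : Measure β) : ℝ :=
  ⨅ π : {π : Measure (α × β) // IsCoupling π μ ν},
    ∫ z, c z.1 z.2 ∂(π : Measure (α × β))

/-- The TL^p distance between `(μ, f)` and `(ν, g)`. -/
noncomputable def dTLp (p : ℝ) {d m : ℕ} (μ ν : Measure (Fin d → ℝ))
    (f g : (Fin d → ℝ) → Fin m → ℝ) : ℝ :=
  (OTCost (fun x y => lpPow p (x - y) + lpPow p (f x - g y)) μ ν) ^ (1 / p)

/-- The uniform discrete (empirical) measure `(1/n) ∑ᵢ δ_{x i}`. -/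
noncomputable def uniformOn {d n : ℕ} (x : Fin n → (Fin d → ℝ)) : Measure (Fin d → ℝ) :=
  (n : ENNReal)⁻¹ • ∑ i, Measure.dirac (x i)

/-- The linear TL^p embedding built from the values `T j = T^μ(x_j)` of a transport map
and the values `F j = f(T^μ(x_j))`: each block of `P̃((μ,f))` in `ℝ^{d+m}` is
`((T^μ(x_j) − x_j) n^{−1/p}, (f(T^μ(x_j)) − h(x_j)) n^{−1/p})`. -/
noncomputable def tlpEmbed (p : ℝ) {d m n : ℕ} (x : Fin n → (Fin d → ℝ))
    (h : (Fin d → ℝ) → Fin m → ℝ) (T : Fin n → (Fin d → ℝ)) (F : Fin n → Fin m → ℝ) :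
    Fin n → (Fin d → ℝ) × (Fin m → ℝ) :=
  fun j => (((n : ℝ) ^ (-(1 / p))) • (T j - x j), ((n : ℝ) ^ (-(1 / p))) • (F j - h (x j)))

/-- The Euclidean ℓ^p norm of a block vector with blocks in `ℝ^{d+m} ≅ ℝ^d × ℝ^m`. -/
noncomputable def blockNormTLp (p : ℝ) {d m n : ℕ}
    (z : Fin n → (Fin d → ℝ) × (Fin m → ℝ)) : ℝ :=
  (∑ j, (lpPow p (z j).1 + lpPow p (z j).2)) ^ (1 / p)


section Aux
open MeasureTheory

lemma integral_of_finsupport {α : Type*} [DecidableEq α] [MeasurableSpace α] [MeasurableSingletonClass α]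
    (μ : Measure α) [IsFiniteMeasure μ] (s : Finset α) (hs : μ (↑s)ᶜ = 0) (g : α → ℝ) :
    ∫ z, g z ∂μ = ∑ z ∈ s, (μ {z}).toReal * g z := by
  have hsm : MeasurableSet (↑s : Set α) := s.finite_toSet.measurableSet
  have hres : μ.restrict ↑s = μ :=
    Measure.restrict_eq_self_of_ae_mem ((ae_iff (p := fun z => z ∈ (↑s : Set α))).2 (by exact hs))
  set g' : α → ℝ := fun z => ∑ a ∈ s, Set.indicator {a} (fun _ => g a) z with hg'
  have hg'm : Measurable g' := by
    apply Finset.measurable_sum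
    intro a _
    exact (measurable_const).indicator (measurableSet_singleton a)
  have hgg' : g =ᵐ[μ] g' := by
    rw [← hres]
    filter_upwards [ae_restrict_mem hsm] with z hz
    simp only [hg', Set.indicator_apply, Set.mem_singleton_iff]
    rw [Finset.sum_ite_eq s z (fun a => g a)]
    simp [Finset.mem_coe.1 hz]
  have hint' : Integrable g' μ := by
    apply integrable_finset_sum
    intro a _
    exact (integrable_const (g a)).indicator (measurableSet_singleton a)
  have hint : Integrable g μ := hint'.congr hgg'.symm
  calc ∫ z, g z ∂μ = ∫ z in ↑s, g z ∂μ := by rw [hres]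
    _ = ∑ z ∈ s, (μ {z}).toReal • g z := integral_finset s (by rw [IntegrableOn, hres]; exact hint)
    _ = ∑ z ∈ s, (μ {z}).toReal * g z := rfl

variable {d n : ℕ}

lemma uniformOn_apply (x : Fin n → (Fin d → ℝ)) {A : Set (Fin d → ℝ)} (hA : MeasurableSet A) :
    uniformOn x A = (n : ENNReal)⁻¹ * ∑ i, A.indicator 1 (x i) := by
  simp [uniformOn, Measure.smul_apply, Measure.finset_sum_apply, Measure.dirac_apply' _ hA,
    smul_eq_mul]

lemma uniformOn_univ (hn : 0 < n) (x : Fin n → (Fin d → ℝ)) :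
    uniformOn x Set.univ = 1 := by
  rw [uniformOn_apply x MeasurableSet.univ]
  simp [ENNReal.inv_mul_cancel (by exact_mod_cast hn.ne' : (n:ENNReal) ≠ 0) (by simp : (n:ENNReal) ≠ ⊤)]

lemma uniformOn_singleton {x : Fin n → (Fin d → ℝ)} (hx : Function.Injective x) (i : Fin n) :
    uniformOn x {x i} = (n : ENNReal)⁻¹ := by
  rw [uniformOn_apply x (measurableSet_singleton _)]
  have : ∀ k, Set.indicator {x i} (1 : (Fin d → ℝ) → ENNReal) (x k) = if k = i then 1 else 0 := by
    intro k
    simp only [Set.indicator_apply, Set.mem_singleton_iff]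
    by_cases hk : k = i
    · simp [hk]
    · simp only [if_neg hk, ite_eq_right_iff]
      exact fun hc => absurd (hx hc) hk
  rw [Finset.sum_congr rfl fun k _ => this k]
  simp

lemma uniformOn_compl_range (x : Fin n → (Fin d → ℝ)) :
    uniformOn x (Set.range x)ᶜ = 0 := by
  rw [uniformOn_apply x (Set.Finite.measurableSet (Set.finite_range x)).compl]
  simp [Set.indicator_apply]

lemma coupling_facts (hn : 0 < n) {x y : Fin n → (Fin d → ℝ)}
    (hx : Function.Injective x) (hy : Function.Injective y)
    (π : Measure ((Fin d → ℝ) × (Fin d → ℝ)))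
    (hc : IsCoupling π (uniformOn x) (uniformOn y))
    (c : (Fin d → ℝ) → (Fin d → ℝ) → ℝ) :
    (∀ i, ∑ j, π {(x i, y j)} = (n : ENNReal)⁻¹) ∧
    (∀ j, ∑ i, π {(x i, y j)} = (n : ENNReal)⁻¹) ∧
    (∫ z, c z.1 z.2 ∂π = ∑ i, ∑ j, (π {(x i, y j)}).toReal * c (x i) (y j)) := by
  classical
  have hπfst : ∀ {A : Set (Fin d → ℝ)}, MeasurableSet A →
      π (Prod.fst ⁻¹' A) = uniformOn x A := by
    intro A hA
    rw [← hc.1, Measure.map_apply measurable_fst hA]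
  have hπsnd : ∀ {A : Set (Fin d → ℝ)}, MeasurableSet A →
      π (Prod.snd ⁻¹' A) = uniformOn y A := by
    intro A hA
    rw [← hc.2, Measure.map_apply measurable_snd hA]
  have hrx : MeasurableSet (Set.range x) := (Set.finite_range x).measurableSet
  have hry : MeasurableSet (Set.range y) := (Set.finite_range y).measurableSet
  have hnullx : π (Prod.fst ⁻¹' (Set.range x)ᶜ) = 0 := by
    rw [hπfst hrx.compl]; exact uniformOn_compl_range x
  have hnully : π (Prod.snd ⁻¹' (Set.range y)ᶜ) = 0 := by
    rw [hπsnd hry.compl]; exact uniformOn_compl_range y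
  have hprob : IsProbabilityMeasure π := by
    constructor
    have huniv : (Set.univ : Set ((Fin d → ℝ) × (Fin d → ℝ))) = Prod.fst ⁻¹' Set.univ := rfl
    rw [huniv, hπfst MeasurableSet.univ, uniformOn_univ hn]
  have hrow : ∀ i, ∑ j, π {(x i, y j)} = (n : ENNReal)⁻¹ := by
    intro i
    have hB : π (⋃ j ∈ (Finset.univ : Finset (Fin n)), ({(x i, y j)} : Set _))
        = ∑ j, π {(x i, y j)} := by
      apply measure_biUnion_finset
      · intro j _ k _ hjk
        simp only [Set.disjoint_singleton_right, Set.mem_singleton_iff, Prod.mk.injEq]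
        exact fun hp => hjk (hy hp.2).symm
      · intro j _
        exact measurableSet_singleton _
    have hsub : Prod.fst ⁻¹' ({x i} : Set _) ⊆
        (⋃ j ∈ (Finset.univ : Finset (Fin n)), ({(x i, y j)} : Set _)) ∪
          Prod.snd ⁻¹' (Set.range y)ᶜ := by
      rintro ⟨a, b⟩ hab
      simp only [Set.mem_preimage, Set.mem_singleton_iff] at hab
      subst hab
      by_cases hb : b ∈ Set.range y
      · obtain ⟨j, rfl⟩ := hb
        exact Or.inl (by simp)
      · exact Or.inr hb
    have hBsub : (⋃ j ∈ (Finset.univ : Finset (Fin n)), ({(x i, y j)} : Set _)) ⊆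
        Prod.fst ⁻¹' ({x i} : Set _) := by
      intro z hz
      simp only [Finset.mem_univ, Set.iUnion_true, Set.mem_iUnion, Set.mem_singleton_iff] at hz
      obtain ⟨j, rfl⟩ := hz
      simp
    have hkey : π (Prod.fst ⁻¹' ({x i} : Set _)) = ∑ j, π {(x i, y j)} := by
      refine le_antisymm ?_ ?_
      · calc π (Prod.fst ⁻¹' ({x i} : Set _))
            ≤ π ((⋃ j ∈ (Finset.univ : Finset (Fin n)), ({(x i, y j)} : Set _)) ∪
                Prod.snd ⁻¹' (Set.range y)ᶜ) := measure_mono hsub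
          _ ≤ π (⋃ j ∈ (Finset.univ : Finset (Fin n)), ({(x i, y j)} : Set _)) +
                π (Prod.snd ⁻¹' (Set.range y)ᶜ) := measure_union_le _ _
          _ = ∑ j, π {(x i, y j)} := by rw [hnully, add_zero, hB]
      · rw [← hB]
        exact measure_mono hBsub
    rw [← hkey, hπfst (measurableSet_singleton _), uniformOn_singleton hx]
  have hcol : ∀ j, ∑ i, π {(x i, y j)} = (n : ENNReal)⁻¹ := by
    intro j
    have hB : π (⋃ i ∈ (Finset.univ : Finset (Fin n)), ({(x i, y j)} : Set _))
        = ∑ i, π {(x i, y j)} := by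
      apply measure_biUnion_finset
      · intro i _ k _ hik
        simp only [Set.disjoint_singleton_right, Set.mem_singleton_iff, Prod.mk.injEq]
        exact fun hp => hik (hx hp.1).symm
      · intro i _
        exact measurableSet_singleton _
    have hsub : Prod.snd ⁻¹' ({y j} : Set _) ⊆
        (⋃ i ∈ (Finset.univ : Finset (Fin n)), ({(x i, y j)} : Set _)) ∪
          Prod.fst ⁻¹' (Set.range x)ᶜ := by
      rintro ⟨a, b⟩ hab
      simp only [Set.mem_preimage, Set.mem_singleton_iff] at hab
      subst hab
      by_cases ha : a ∈ Set.range x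
      · obtain ⟨i, rfl⟩ := ha
        exact Or.inl (by simp)
      · exact Or.inr ha
    have hBsub : (⋃ i ∈ (Finset.univ : Finset (Fin n)), ({(x i, y j)} : Set _)) ⊆
        Prod.snd ⁻¹' ({y j} : Set _) := by
      intro z hz
      simp only [Finset.mem_univ, Set.iUnion_true, Set.mem_iUnion, Set.mem_singleton_iff] at hz
      obtain ⟨i, rfl⟩ := hz
      simp
    have hkey : π (Prod.snd ⁻¹' ({y j} : Set _)) = ∑ i, π {(x i, y j)} := by
      refine le_antisymm ?_ ?_
      · calc π (Prod.snd ⁻¹' ({y j} : Set _))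
            ≤ π ((⋃ i ∈ (Finset.univ : Finset (Fin n)), ({(x i, y j)} : Set _)) ∪
                Prod.fst ⁻¹' (Set.range x)ᶜ) := measure_mono hsub
          _ ≤ π (⋃ i ∈ (Finset.univ : Finset (Fin n)), ({(x i, y j)} : Set _)) +
                π (Prod.fst ⁻¹' (Set.range x)ᶜ) := measure_union_le _ _
          _ = ∑ i, π {(x i, y j)} := by rw [hnullx, add_zero, hB]
      · rw [← hB]
        exact measure_mono hBsub
    rw [← hkey, hπsnd (measurableSet_singleton _), uniformOn_singleton hy]
  refine ⟨hrow, hcol, ?_⟩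
  set s : Finset ((Fin d → ℝ) × (Fin d → ℝ)) :=
    Finset.image (fun ij : Fin n × Fin n => (x ij.1, y ij.2)) Finset.univ with hs
  have hscompl : π (↑s)ᶜ = 0 := by
    have hsub : (↑s : Set _)ᶜ ⊆
        Prod.fst ⁻¹' (Set.range x)ᶜ ∪ Prod.snd ⁻¹' (Set.range y)ᶜ := by
      rintro ⟨a, b⟩ hab
      by_contra hcon
      simp only [Set.mem_union, Set.mem_preimage, Set.mem_compl_iff, not_or, not_not] at hcon
      obtain ⟨i, rfl⟩ := hcon.1
      obtain ⟨j, rfl⟩ := hcon.2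
      refine hab ?_
      simp only [hs, Finset.coe_image, Set.mem_image, Finset.coe_univ, Set.mem_univ]
      exact ⟨(i, j), trivial, rfl⟩
    exact measure_mono_null hsub (measure_union_null hnullx hnully)
  have hinj : ∀ a ∈ (Finset.univ : Finset (Fin n × Fin n)),
      ∀ b ∈ Finset.univ, (fun ij : Fin n × Fin n => (x ij.1, y ij.2)) a
        = (fun ij : Fin n × Fin n => (x ij.1, y ij.2)) b → a = b := by
    rintro ⟨i, j⟩ _ ⟨k, l⟩ _ hab
    simp only [Prod.mk.injEq] at hab
    exact Prod.ext (hx hab.1) (hy hab.2)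
  rw [integral_of_finsupport π s hscompl (fun z => c z.1 z.2), hs, Finset.sum_image hinj]
  rw [Fintype.sum_prod_type]

lemma lpPow_nonneg (p : ℝ) {k : ℕ} (v : Fin k → ℝ) : 0 ≤ lpPow p v :=
  Finset.sum_nonneg fun i _ => Real.rpow_nonneg (abs_nonneg _) p

lemma lpPow_smul (p : ℝ) {k : ℕ} {a : ℝ} (ha : 0 ≤ a) (v : Fin k → ℝ) :
    lpPow p (a • v) = a ^ p * lpPow p v := by
  unfold lpPow
  rw [Finset.mul_sum]
  refine Finset.sum_congr rfl fun i _ => ?_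
  simp only [Pi.smul_apply, smul_eq_mul, abs_mul, abs_of_nonneg ha]
  rw [Real.mul_rpow ha (abs_nonneg _)]

lemma lpPow_neg (p : ℝ) {k : ℕ} (v : Fin k → ℝ) : lpPow p (-v) = lpPow p v := by
  unfold lpPow
  refine Finset.sum_congr rfl fun i _ => ?_
  simp

end Aux

/-- for uniform discrete measures on `n` distinct points an optimal TL^p
transport map (a permutation) exists, and the linear TL^p embedding `P̃` satisfies
`P̃((σ,h)) = 0` and `|P̃((σ,h)) − P̃((μ,f))|_p = d_TLp((σ,h),(μ,f))`. -/
theorem linear_tlp_discrete {d m : ℕ} (Ω : Set (Fin d → ℝ)) (hΩo : IsOpen Ω)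
    (hΩb : Bornology.IsBounded Ω) (p : ℝ) (hp1 : 1 < p)
    (n : ℕ) (hn : 0 < n) (x y : Fin n → (Fin d → ℝ))
    (hxΩ : ∀ i, x i ∈ Ω) (hyΩ : ∀ j, y j ∈ Ω)
    (hx : Function.Injective x) (hy : Function.Injective y)
    (h f : (Fin d → ℝ) → Fin m → ℝ) :
    ∃ σperm : Equiv.Perm (Fin n),
      uniformOn (fun j => y (σperm j)) = uniformOn y ∧
      dTLp p (uniformOn x) (uniformOn y) h f ^ p
        = (1 / (n : ℝ)) * ∑ j,
            (lpPow p (x j - y (σperm j)) + lpPow p (h (x j) - f (y (σperm j)))) ∧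
      tlpEmbed p x h x (fun j => h (x j)) = 0 ∧
      blockNormTLp p
          (tlpEmbed p x h x (fun j => h (x j))
            - tlpEmbed p x h (fun j => y (σperm j)) (fun j => f (y (σperm j))))
        = dTLp p (uniformOn x) (uniformOn y) h f := by
  classical
  have hp0 : (0:ℝ) < p := lt_trans one_pos hp1
  have hppos : p ≠ 0 := hp0.ne'
  set c : (Fin d → ℝ) → (Fin d → ℝ) → ℝ :=
    fun a b => lpPow p (a - b) + lpPow p (h a - f b) with hc
  obtain ⟨σ₀, -, hσ₀min⟩ := Finset.exists_min_image Finset.univ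
    (fun σ : Equiv.Perm (Fin n) => ∑ i, c (x i) (y (σ i))) ⟨1, Finset.mem_univ 1⟩
  set G : ℝ := ∑ i, c (x i) (y (σ₀ i)) with hG
  have hGnonneg : 0 ≤ G :=
    Finset.sum_nonneg fun i _ => add_nonneg (lpPow_nonneg _ _) (lpPow_nonneg _ _)
  set cmin : ℝ := (1 / (n:ℝ)) * G with hcmin
  have hnR : (0:ℝ) < n := by exact_mod_cast hn
  have hcminnonneg : 0 ≤ cmin := mul_nonneg (by positivity) hGnonneg
  have hnE0 : (n:ENNReal) ≠ 0 := by exact_mod_cast hn.ne'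
  set π₀ : Measure ((Fin d → ℝ) × (Fin d → ℝ)) :=
    (n : ENNReal)⁻¹ • ∑ i, Measure.dirac (x i, y (σ₀ i)) with hπ₀
  have hcoup : IsCoupling π₀ (uniformOn x) (uniformOn y) := by
    constructor
    · refine Measure.ext fun A hA => ?_
      rw [Measure.map_apply measurable_fst hA, uniformOn_apply x hA]
      simp only [hπ₀, Measure.smul_apply, Measure.finset_sum_apply, smul_eq_mul,
        Measure.dirac_apply' _ (measurable_fst hA)]
      congr 1
    · refine Measure.ext fun A hA => ?_
      rw [Measure.map_apply measurable_snd hA, uniformOn_apply y hA]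
      simp only [hπ₀, Measure.smul_apply, Measure.finset_sum_apply, smul_eq_mul,
        Measure.dirac_apply' _ (measurable_snd hA)]
      congr 1
      rw [← Equiv.sum_comp σ₀ (fun i => A.indicator (1 : (Fin d → ℝ) → ENNReal) (y i))]
      exact Finset.sum_congr rfl fun i _ => rfl
  have hcost₀ : ∫ z, c z.1 z.2 ∂π₀ = cmin := by
    have hint : ∀ pt : (Fin d → ℝ) × (Fin d → ℝ),
        Integrable (fun z : (Fin d → ℝ) × (Fin d → ℝ) => c z.1 z.2) (Measure.dirac pt) :=
      fun pt => (integrable_const (c pt.1 pt.2)).congr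
        (ae_eq_dirac (fun z : (Fin d → ℝ) × (Fin d → ℝ) => c z.1 z.2)).symm
    rw [hπ₀, integral_smul_measure, integral_finset_sum_measure (fun i _ => hint _)]
    simp only [integral_dirac]
    rw [ENNReal.toReal_inv]
    simp only [ENNReal.toReal_natCast]
    rw [hcmin, hG, smul_eq_mul, inv_eq_one_div]
  have hlower : ∀ π : Measure ((Fin d → ℝ) × (Fin d → ℝ)),
      IsCoupling π (uniformOn x) (uniformOn y) → cmin ≤ ∫ z, c z.1 z.2 ∂π := by
    intro π hπ
    obtain ⟨hrowE, hcolE, hintf⟩ := coupling_facts hn hx hy π hπ c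
    have hfin : ∀ i j, π {(x i, y j)} ≠ ⊤ := by
      intro i j
      have hle : π {(x i, y j)} ≤ ∑ j', π {(x i, y j')} :=
        Finset.single_le_sum (f := fun j' => π {(x i, y j')}) (fun _ _ => zero_le)
          (Finset.mem_univ j)
      rw [hrowE i] at hle
      exact ne_top_of_le_ne_top (ENNReal.inv_ne_top.2 hnE0) hle
    have hrowR : ∀ i, ∑ j, (π {(x i, y j)}).toReal = 1 / (n:ℝ) := by
      intro i
      rw [← ENNReal.toReal_sum (fun j _ => hfin i j), hrowE i, ENNReal.toReal_inv,
        ENNReal.toReal_natCast, one_div]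
    have hcolR : ∀ j, ∑ i, (π {(x i, y j)}).toReal = 1 / (n:ℝ) := by
      intro j
      rw [← ENNReal.toReal_sum (fun i _ => hfin i j), hcolE j, ENNReal.toReal_inv,
        ENNReal.toReal_natCast, one_div]
    set M : Matrix (Fin n) (Fin n) ℝ :=
      Matrix.of fun i j => (n:ℝ) * (π {(x i, y j)}).toReal with hM
    have hMds : M ∈ doublyStochastic ℝ (Fin n) := by
      rw [mem_doublyStochastic_iff_sum]
      refine ⟨fun i j => mul_nonneg hnR.le ENNReal.toReal_nonneg, fun i => ?_, fun j => ?_⟩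
      · rw [show (∑ j, M i j) = (n:ℝ) * ∑ j, (π {(x i, y j)}).toReal from
          (Finset.mul_sum _ _ _).symm, hrowR i]
        field_simp
      · rw [show (∑ i, M i j) = (n:ℝ) * ∑ i, (π {(x i, y j)}).toReal from
          (Finset.mul_sum _ _ _).symm, hcolR j]
        field_simp
    obtain ⟨wt, hwt0, hwt1, hwtM⟩ := exists_eq_sum_perm_of_mem_doublyStochastic hMds
    have hMsum : ∑ i, ∑ j, M i j * c (x i) (y j)
        = ∑ σ : Equiv.Perm (Fin n), wt σ * ∑ i, c (x i) (y (σ i)) := by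
      rw [← hwtM]
      have hperm : ∀ (σ : Equiv.Perm (Fin n)) (i j : Fin n),
          (Equiv.Perm.permMatrix ℝ σ) i j = if σ i = j then 1 else 0 := by
        intro σ i j
        simp [Equiv.Perm.permMatrix, PEquiv.toMatrix_apply, Equiv.toPEquiv_apply,
          Option.mem_def, eq_comm]
      calc ∑ i, ∑ j, (∑ σ : Equiv.Perm (Fin n), wt σ • Equiv.Perm.permMatrix ℝ σ) i j
              * c (x i) (y j)
          = ∑ i, ∑ j, ∑ σ : Equiv.Perm (Fin n),
              wt σ * ((if σ i = j then 1 else 0) * c (x i) (y j)) := by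
            refine Finset.sum_congr rfl fun i _ => Finset.sum_congr rfl fun j _ => ?_
            rw [Matrix.sum_apply, Finset.sum_mul]
            refine Finset.sum_congr rfl fun σ _ => ?_
            rw [Matrix.smul_apply, hperm, smul_eq_mul, mul_assoc]
        _ = ∑ i, ∑ σ : Equiv.Perm (Fin n), wt σ * c (x i) (y (σ i)) := by
            refine Finset.sum_congr rfl fun i _ => ?_
            rw [Finset.sum_comm]
            refine Finset.sum_congr rfl fun σ _ => ?_
            rw [← Finset.mul_sum]
            congr 1
            simp only [ite_mul, one_mul, zero_mul]
            rw [Finset.sum_ite_eq Finset.univ (σ i) (fun j => c (x i) (y j))]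
            simp
        _ = ∑ σ : Equiv.Perm (Fin n), wt σ * ∑ i, c (x i) (y (σ i)) := by
            rw [Finset.sum_comm]
            refine Finset.sum_congr rfl fun σ _ => ?_
            rw [Finset.mul_sum]
    have hGle : G ≤ ∑ i, ∑ j, M i j * c (x i) (y j) := by
      rw [hMsum]
      calc G = ∑ σ : Equiv.Perm (Fin n), wt σ * G := by
            rw [← Finset.sum_mul, hwt1, one_mul]
        _ ≤ ∑ σ : Equiv.Perm (Fin n), wt σ * ∑ i, c (x i) (y (σ i)) :=
            Finset.sum_le_sum fun σ _ =>
              mul_le_mul_of_nonneg_left (hσ₀min σ (Finset.mem_univ σ)) (hwt0 σ)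
    rw [hintf]
    have hident : ∑ i, ∑ j, (π {(x i, y j)}).toReal * c (x i) (y j)
        = (1/(n:ℝ)) * ∑ i, ∑ j, M i j * c (x i) (y j) := by
      rw [Finset.mul_sum]
      refine Finset.sum_congr rfl fun i _ => ?_
      rw [Finset.mul_sum]
      refine Finset.sum_congr rfl fun j _ => ?_
      simp only [hM, Matrix.of_apply]
      field_simp
    rw [hident, hcmin]
    exact mul_le_mul_of_nonneg_left hGle (by positivity)
  have hOT : OTCost c (uniformOn x) (uniformOn y) = cmin := by
    haveI : Nonempty {π : Measure ((Fin d → ℝ) × (Fin d → ℝ)) //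
        IsCoupling π (uniformOn x) (uniformOn y)} := ⟨⟨π₀, hcoup⟩⟩
    unfold OTCost
    apply le_antisymm
    · exact le_trans
        (ciInf_le ⟨cmin, by rintro r ⟨⟨π, hπ⟩, rfl⟩; exact hlower π hπ⟩ ⟨π₀, hcoup⟩)
        (le_of_eq hcost₀)
    · exact le_ciInf fun πs => hlower πs.1 πs.2
  have hdTLp : dTLp p (uniformOn x) (uniformOn y) h f = cmin ^ (1/p) := by
    rw [dTLp, hOT]
  refine ⟨σ₀, ?_, ?_, ?_, ?_⟩
  · show uniformOn (fun j => y (σ₀ j)) = uniformOn y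
    unfold uniformOn
    congr 1
    exact Equiv.sum_comp σ₀ (fun i => Measure.dirac (y i))
  · rw [hdTLp, ← Real.rpow_mul hcminnonneg, one_div, inv_mul_cancel₀ hppos, Real.rpow_one,
      hcmin, hG]
  · funext j
    simp [tlpEmbed, Prod.ext_iff]
  · have hc0 : (0:ℝ) ≤ (n:ℝ) ^ (-(1/p)) := Real.rpow_nonneg hnR.le _
    have hpow : ((n:ℝ) ^ (-(1/p))) ^ p = 1 / (n:ℝ) := by
      rw [← Real.rpow_mul hnR.le, neg_mul, one_div, inv_mul_cancel₀ hppos,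
        Real.rpow_neg_one, one_div]
    have hdiff : ∀ j : Fin n, (tlpEmbed p x h x (fun j => h (x j))
        - tlpEmbed p x h (fun j => y (σ₀ j)) (fun j => f (y (σ₀ j)))) j
        = (((n:ℝ) ^ (-(1/p))) • (x j - y (σ₀ j)),
            ((n:ℝ) ^ (-(1/p))) • (h (x j) - f (y (σ₀ j)))) := by
      intro j
      simp only [tlpEmbed, Pi.sub_apply, Prod.mk_sub_mk]
      rw [sub_self, smul_zero, zero_sub, ← smul_neg, neg_sub,
        sub_self, smul_zero, zero_sub, ← smul_neg, neg_sub]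
    rw [hdTLp, blockNormTLp]
    congr 1
    rw [show cmin = ∑ j, (1/(n:ℝ)) * c (x j) (y (σ₀ j)) by
      rw [← Finset.mul_sum, hcmin, hG]]
    refine Finset.sum_congr rfl fun j _ => ?_
    rw [hdiff j]
    show lpPow p (((n:ℝ) ^ (-(1/p))) • (x j - y (σ₀ j)))
        + lpPow p (((n:ℝ) ^ (-(1/p))) • (h (x j) - f (y (σ₀ j)))) = _
    rw [lpPow_smul p hc0, lpPow_smul p hc0, hpow, ← mul_add, hc]
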